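/- Let G be a finite group, α : G × G → ℂˣ a 2-cocycle such that the twisted group algebra ℂ^αG is a simple ring, and let N ⊴ G be a normal subgroup. Then the action of G/N on the set Irr(ℂ^αN) of isomorphism classes of simple ℂ^αN-modules, given by gN·[M] = [{}^{g}M], is transitive. In particular, all simple ℂ^αN-modules have the same dimension. -/

import Mathlib

/-- A 2-cocycle on `G` with values in `ℂˣ`. -/
def IsTwoCocycle {G : Type} [Group G] (α : G → G → ℂˣ) : Prop :=
  ∀ g h k : G, α g h * α (g * h) k = α h k * α g (h * k)

/-- A twisted group algebra `ℂ^αG`: a ℂ-algebra with a basis `u_g` of invertible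
elements satisfying `u_g * u_h = α g h • u_{gh}`. -/
structure TwistedGroupAlgebra (G : Type) [Group G] (α : G → G → ℂˣ) where
  carrier : Type
  [ringStr : Ring carrier]
  [algStr : Algebra ℂ carrier]
  u : G → carrierˣ
  basis : Module.Basis G ℂ carrier
  basis_eq : ∀ g : G, basis g = (u g : carrier)
  u_mul : ∀ g h : G, (u g : carrier) * (u h : carrier) = (α g h : ℂ) • (u (g * h) : carrier)

attribute [instance] TwistedGroupAlgebra.ringStr TwistedGroupAlgebra.algStr

namespace TwistedGroupAlgebra

variable {G : Type} [Group G] {α : G → G → ℂˣ}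

/-- The subalgebra `ℂ^αN ⊆ ℂ^αG` spanned by the `u_n`, `n ∈ N`. -/
def sub (A : TwistedGroupAlgebra G α) (N : Subgroup G) : Subalgebra ℂ A.carrier :=
  Algebra.adjoin ℂ ((fun g : G => (A.u g : A.carrier)) '' (N : Set G))

/-- The dimension over `ℂ` of a `ℂ^αN`-module. -/
noncomputable def dimC (A : TwistedGroupAlgebra G α) (N : Subgroup G) (M : Type)
    [AddCommGroup M] [Module (A.sub N) M] : ℕ :=
  Module.finrank ℂ (RestrictScalars ℂ (A.sub N) M)

/-- `TwistIso A N g M M'` says that `M'` is isomorphic to the twist `{}^{g}M` of the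
`ℂ^αN`-module `M`, i.e. there is an additive bijection `e : M' → M` with
`e (a • m') = (u_g⁻¹ a u_g) • e m'` for all `a ∈ ℂ^αN`. -/
def TwistIso (A : TwistedGroupAlgebra G α) (N : Subgroup G) (g : G)
    (M M' : Type) [AddCommGroup M] [Module (A.sub N) M]
    [AddCommGroup M'] [Module (A.sub N) M'] : Prop :=
  ∃ e : M' ≃+ M, ∀ (a : A.sub N) (m' : M')
    (h : (((A.u g)⁻¹ : A.carrierˣ) : A.carrier) * (a : A.carrier) * (A.u g : A.carrier) ∈
      A.sub N),
    e (a • m') =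
      (⟨(((A.u g)⁻¹ : A.carrierˣ) : A.carrier) * (a : A.carrier) * (A.u g : A.carrier), h⟩ :
        A.sub N) • e m'

/-- The action of `G/N` on isomorphism classes of simple `ℂ^αN`-modules is transitive. -/
def TransAction (A : TwistedGroupAlgebra G α) (N : Subgroup G) : Prop :=
  ∀ (M : Type) [AddCommGroup M] [Module (A.sub N) M]
    (M' : Type) [AddCommGroup M'] [Module (A.sub N) M'],
    IsSimpleModule (A.sub N) M → IsSimpleModule (A.sub N) M' →
    ∃ g : G, TwistIso A N g M M'

/-- The action of `G/N` on isomorphism classes of simple `ℂ^αN`-modules is free. -/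
def FreeAction (A : TwistedGroupAlgebra G α) (N : Subgroup G) : Prop :=
  ∀ (M : Type) [AddCommGroup M] [Module (A.sub N) M], IsSimpleModule (A.sub N) M →
    ∀ g : G, TwistIso A N g M M → g ∈ N

/-- The restriction of the cohomology class of `α` to the subgroup `N` is trivial. -/
def RestTrivial (α : G → G → ℂˣ) (N : Subgroup G) : Prop :=
  ∃ β : N → ℂˣ, ∀ n n' : N, α n n' = β n * β n' * (β (n * n'))⁻¹

end TwistedGroupAlgebra

section Aux
open TwistedGroupAlgebra
variable {G : Type} [Group G] {α : G → G → ℂˣ} (A : TwistedGroupAlgebra G α)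

lemma aux_u_one : (A.u 1 : A.carrier) = (α 1 1 : ℂ) • 1 := by
  have h := A.u_mul 1 1
  rw [one_mul] at h
  calc (A.u 1 : A.carrier) = ↑(A.u 1)⁻¹ * (↑(A.u 1) * ↑(A.u 1)) := by
        rw [← mul_assoc, Units.inv_mul, one_mul]
    _ = (α 1 1 : ℂ) • 1 := by rw [h, mul_smul_comm, Units.inv_mul]

lemma aux_u_inv (g : G) :
    (↑(A.u g)⁻¹ : A.carrier) = ((α g⁻¹ g : ℂ) * (α 1 1 : ℂ))⁻¹ • (A.u g⁻¹ : A.carrier) := by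
  refine Units.inv_eq_of_mul_eq_one_left ?_
  rw [smul_mul_assoc, A.u_mul, inv_mul_cancel, aux_u_one, smul_smul, smul_smul, mul_assoc,
    inv_mul_cancel₀ (mul_ne_zero (Units.ne_zero _) (Units.ne_zero _)), one_smul]

lemma aux_u_mem {N : Subgroup G} {n : G} (hn : n ∈ N) : (A.u n : A.carrier) ∈ A.sub N :=
  Algebra.subset_adjoin ⟨n, hn, rfl⟩

lemma aux_uinv_mem {N : Subgroup G} {n : G} (hn : n ∈ N) :
    (↑(A.u n)⁻¹ : A.carrier) ∈ A.sub N := by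
  rw [aux_u_inv]
  exact Subalgebra.smul_mem _ (aux_u_mem A (N.inv_mem hn)) _

/-- Conjugation by the unit `u g` as an algebra homomorphism. -/
def conjHom (v : A.carrierˣ) : A.carrier →ₐ[ℂ] A.carrier where
  toFun x := ↑v⁻¹ * x * ↑v
  map_one' := by simp
  map_mul' x y := by
    simp only [mul_assoc, Units.mul_inv_cancel_left]
  map_zero' := by simp
  map_add' x y := by noncomm_ring
  commutes' r := by
    show ↑v⁻¹ * algebraMap ℂ A.carrier r * ↑v = algebraMap ℂ A.carrier r
    rw [mul_assoc, Algebra.commutes r (↑v : A.carrier), ← mul_assoc, Units.inv_mul, one_mul]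

lemma aux_conj_u (g n : G) :
    (↑(A.u g)⁻¹ : A.carrier) * (A.u n : A.carrier) * (A.u g : A.carrier) =
      ((α n g : ℂ) * (α g (g⁻¹ * n * g) : ℂ)⁻¹) • (A.u (g⁻¹ * n * g) : A.carrier) := by
  have h1 := A.u_mul n g
  have h2 := A.u_mul g (g⁻¹ * n * g)
  rw [show g * (g⁻¹ * n * g) = n * g by group] at h2
  have h3 : (A.u (n * g) : A.carrier) =
      (α g (g⁻¹ * n * g) : ℂ)⁻¹ • ((A.u g : A.carrier) * (A.u (g⁻¹ * n * g) : A.carrier)) := by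
    rw [h2, smul_smul, inv_mul_cancel₀ (Units.ne_zero _), one_smul]
  calc (↑(A.u g)⁻¹ : A.carrier) * (A.u n : A.carrier) * (A.u g : A.carrier)
      = ↑(A.u g)⁻¹ * ((A.u n : A.carrier) * (A.u g : A.carrier)) := by rw [mul_assoc]
    _ = (α n g : ℂ) • (↑(A.u g)⁻¹ * (A.u (n * g) : A.carrier)) := by
        rw [h1, mul_smul_comm]
    _ = ((α n g : ℂ) * (α g (g⁻¹ * n * g) : ℂ)⁻¹) • (A.u (g⁻¹ * n * g) : A.carrier) := by
        rw [h3, mul_smul_comm, ← mul_assoc, Units.inv_mul, one_mul, smul_smul]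

lemma aux_conj_mem {N : Subgroup G} [N.Normal] (g : G) {x : A.carrier} (hx : x ∈ A.sub N) :
    (↑(A.u g)⁻¹ : A.carrier) * x * (A.u g : A.carrier) ∈ A.sub N := by
  have : conjHom A (A.u g) x ∈ (A.sub N).map (conjHom A (A.u g)) :=
    Subalgebra.mem_map.mpr ⟨x, hx, rfl⟩
  rw [show (A.sub N).map (conjHom A (A.u g)) =
      Algebra.adjoin ℂ (conjHom A (A.u g) '' ((fun g : G => (A.u g : A.carrier)) '' (N : Set G)))
    from AlgHom.map_adjoin _ _] at this
  refine Algebra.adjoin_le ?_ this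
  rintro _ ⟨_, ⟨n, hn, rfl⟩, rfl⟩
  show (↑(A.u g)⁻¹ : A.carrier) * (A.u n : A.carrier) * (A.u g : A.carrier) ∈ A.sub N
  rw [aux_conj_u]
  exact Subalgebra.smul_mem _ (aux_u_mem A (Subgroup.Normal.conj_mem' ‹N.Normal› n hn g)) _

lemma aux_conj_mem' {N : Subgroup G} [N.Normal] (g : G) {x : A.carrier} (hx : x ∈ A.sub N) :
    (A.u g : A.carrier) * x * (↑(A.u g)⁻¹ : A.carrier) ∈ A.sub N := by
  have hug : (A.u g : A.carrier) =
      ((α g g⁻¹ : ℂ) * (α 1 1 : ℂ)) • (↑(A.u g⁻¹)⁻¹ : A.carrier) := by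
    rw [aux_u_inv A g⁻¹, inv_inv, smul_smul, mul_inv_cancel₀
      (mul_ne_zero (Units.ne_zero _) (Units.ne_zero _)), one_smul]
  rw [hug, aux_u_inv A g, smul_mul_assoc, smul_mul_assoc, mul_smul_comm, smul_smul]
  exact Subalgebra.smul_mem _ (aux_conj_mem A g⁻¹ hx) _

end Aux
section Maschke
open TwistedGroupAlgebra
variable {G : Type} [Group G] {α : G → G → ℂˣ} (A : TwistedGroupAlgebra G α)

lemma aux_proj (N : Subgroup G) [Fintype G] (V : Type) [AddCommGroup V]
    [Module (A.sub N) V] (W : Submodule (A.sub N) V) :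
    ∃ P : V →ₗ[A.sub N] W, ∀ x : W, P ↑x = x := by
  classical
  letI instC : Module ℂ V := Module.compHom V (algebraMap ℂ (A.sub N))
  have hCs : ∀ (c : ℂ) (v : V), c • v = (algebraMap ℂ (A.sub N) c) • v := fun _ _ => rfl
  letI : IsScalarTower ℂ (A.sub N) V :=
    ⟨fun c b v => by rw [Algebra.smul_def, mul_smul]; rfl⟩
  have ccomm : ∀ (c : ℂ) (b : (A.sub N)) (v : V), b • c • v = c • b • v := by
    intro c b v
    rw [hCs, hCs, ← mul_smul, ← mul_smul, Algebra.commutes]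
  -- a ℂ-linear projection onto W
  obtain ⟨Cc, hCc⟩ := (W.restrictScalars ℂ).exists_isCompl
  set π₀ : V →ₗ[ℂ] V := (W.restrictScalars ℂ).subtype.comp
    ((W.restrictScalars ℂ).linearProjOfIsCompl Cc hCc) with hπ₀
  have hπ₀mem : ∀ v, π₀ v ∈ W := fun v => ((W.restrictScalars ℂ).linearProjOfIsCompl Cc hCc v).2
  have hπ₀id : ∀ v ∈ W, π₀ v = v := by
    intro v hv
    show ↑((W.restrictScalars ℂ).linearProjOfIsCompl Cc hCc v) = v
    exact congrArg Subtype.val (Submodule.linearProjOfIsCompl_apply_left hCc ⟨v, hv⟩)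
  letI : Fintype ↥N := Fintype.ofFinite ↥N
  haveI : Nonempty ↥N := ⟨1⟩
  -- the units u n as units of (A.sub N)
  have humem : ∀ n : ↥N, (A.u ↑n : A.carrier) ∈ (A.sub N) := fun n => aux_u_mem A n.2
  have hvmem : ∀ n : ↥N, (↑(A.u ↑n)⁻¹ : A.carrier) ∈ (A.sub N) := fun n => aux_uinv_mem A n.2
  set w : ↥N → (A.sub N)ˣ := fun n =>
    { val := ⟨(A.u ↑n : A.carrier), humem n⟩
      inv := ⟨(↑(A.u ↑n)⁻¹ : A.carrier), hvmem n⟩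
      val_inv := Subtype.ext (Units.mul_inv _)
      inv_val := Subtype.ext (Units.inv_mul _) } with hw
  have hrel : ∀ m n : ↥N, (w m : (A.sub N)) * (w n : (A.sub N)) = (α ↑m ↑n : ℂ) • (w (m * n) : (A.sub N)) :=
    fun m n => Subtype.ext (A.u_mul ↑m ↑n)
  -- the averaged projection
  set T : (A.sub N)ˣ → V → V := fun ww v => (ww : (A.sub N)) • π₀ ((↑ww⁻¹ : (A.sub N)) • v) with hT
  set p : V → V := fun v => (Fintype.card ↥N : ℂ)⁻¹ • ∑ n : ↥N, T (w n) v with hp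
  have hTscale : ∀ (ww ww' : (A.sub N)ˣ) (c : ℂˣ), (ww : (A.sub N)) = (c : ℂ) • (ww' : (A.sub N)) → T ww = T ww' := by
    intro ww ww' c hc
    have hinv : (↑ww⁻¹ : (A.sub N)) = (c : ℂ)⁻¹ • (↑ww'⁻¹ : (A.sub N)) := by
      refine Units.inv_eq_of_mul_eq_one_left ?_
      rw [hc, smul_mul_smul_comm, Units.inv_mul,
        inv_mul_cancel₀ (Units.ne_zero c), one_smul]
    funext v
    rw [hT]
    simp only
    rw [hc, hinv, smul_assoc, smul_assoc, map_smul, ccomm ((c:ℂ)⁻¹), smul_smul,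
      mul_inv_cancel₀ (Units.ne_zero c), one_smul]
  have hTmul : ∀ (x y : (A.sub N)ˣ) (v : V), T (x * y) v = (x : (A.sub N)) • T y ((↑x⁻¹ : (A.sub N)) • v) := by
    intro x y v
    rw [hT]
    simp only [Units.val_mul, mul_inv_rev]
    rw [mul_smul, mul_smul]
  have hTunit : ∀ (x : (A.sub N)ˣ) (v : V), (↑x⁻¹ : (A.sub N)) • (x : (A.sub N)) • v = v := by
    intro x v
    rw [← mul_smul, Units.inv_mul]
    exact one_smul _ v
  have hTunit' : ∀ (x : (A.sub N)ˣ) (v : V), (x : (A.sub N)) • (↑x⁻¹ : (A.sub N)) • v = v := by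
    intro x v
    rw [← mul_smul, Units.mul_inv]
    exact one_smul _ v
  -- p commutes with the action of the units u n
  have hp_u : ∀ (m : ↥N) (v : V), p ((w m : (A.sub N)) • v) = (w m : (A.sub N)) • p v := by
    intro m v
    rw [hp]
    simp only
    rw [ccomm]
    congr 1
    rw [Finset.smul_sum]
    refine (Fintype.sum_bijective (fun n => m * n) (Group.mulLeft_bijective m)
      (fun n => (w m : (A.sub N)) • T (w n) v) (fun n => T (w n) ((w m : (A.sub N)) • v))
      ?_).symm
    intro n
    have h1 : T (w m * w n) = T (w (m * n)) :=
      hTscale _ _ (α ↑m ↑n) (hrel m n)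
    rw [← h1, hTmul, hTunit]
  -- p is ℂ-linear and additive
  have hp_add : ∀ v₁ v₂ : V, p (v₁ + v₂) = p v₁ + p v₂ := by
    intro v₁ v₂
    rw [hp]
    simp only [hT, smul_add, map_add]
    rw [Finset.sum_add_distrib, smul_add]
  have hp_c : ∀ (c : ℂ) (v : V), p (c • v) = c • p v := by
    intro c v
    rw [hp]
    simp only [hT]
    rw [smul_comm]
    congr 1
    rw [Finset.smul_sum]
    refine Finset.sum_congr rfl fun n _ => ?_
    rw [ccomm, map_smul, ccomm]
  -- p is (A.sub N)-linear
  have hp_lin : ∀ (b : (A.sub N)) (v : V), p (b • v) = b • p v := by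
    rintro ⟨bx, hbx⟩ v
    revert v
    show ∀ v, p ((⟨bx, hbx⟩ : (A.sub N)) • v) = (⟨bx, hbx⟩ : (A.sub N)) • p v
    refine Algebra.adjoin_induction
      (p := fun x hx => ∀ v, p ((⟨x, hx⟩ : (A.sub N)) • v) = (⟨x, hx⟩ : (A.sub N)) • p v)
      ?_ ?_ ?_ ?_ hbx
    · rintro _ ⟨n, hn, rfl⟩ v
      exact hp_u ⟨n, hn⟩ v
    · intro r v
      have : (⟨algebraMap ℂ A.carrier r, Subalgebra.algebraMap_mem _ r⟩ : (A.sub N)) =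
          algebraMap ℂ (A.sub N) r := rfl
      rw [this, ← hCs, ← hCs, hp_c]
    · intro x y hx hy ihx ihy v
      have : (⟨x + y, add_mem hx hy⟩ : (A.sub N)) = ⟨x, hx⟩ + ⟨y, hy⟩ := rfl
      rw [this, add_smul, add_smul, hp_add, ihx, ihy]
    · intro x y hx hy ihx ihy v
      have : (⟨x * y, mul_mem hx hy⟩ : (A.sub N)) = ⟨x, hx⟩ * ⟨y, hy⟩ := rfl
      rw [this, mul_smul, mul_smul, ihx, ihy]
  -- p maps into W and fixes W
  have hWc : ∀ (c : ℂ) (x : V), x ∈ W → c • x ∈ W := by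
    intro c x hx
    rw [hCs]
    exact W.smul_mem _ hx
  have hp_mem : ∀ v, p v ∈ W := by
    intro v
    refine hWc _ _ (Submodule.sum_mem _ fun n _ => ?_)
    exact W.smul_mem _ (hπ₀mem _)
  have hp_id : ∀ v ∈ W, p v = v := by
    intro v hv
    rw [hp]
    simp only [hT]
    have : ∀ n : ↥N, (w n : (A.sub N)) • π₀ ((↑(w n)⁻¹ : (A.sub N)) • v) = v := by
      intro n
      rw [hπ₀id _ (W.smul_mem _ hv), hTunit']
    rw [Finset.sum_congr rfl fun n _ => this n, Finset.sum_const, Finset.card_univ,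
      ← Nat.cast_smul_eq_nsmul ℂ, smul_smul,
      inv_mul_cancel₀ (Nat.cast_ne_zero.mpr Fintype.card_ne_zero), one_smul]
  refine ⟨{ toFun := fun v => ⟨p v, hp_mem v⟩
            map_add' := fun v₁ v₂ => Subtype.ext (hp_add v₁ v₂)
            map_smul' := fun b v => Subtype.ext (hp_lin b v) }, fun x => Subtype.ext (hp_id _ x.2)⟩

end Maschke
section Embed
open TwistedGroupAlgebra
variable {G : Type} [Group G] [Fintype G] {α : G → G → ℂˣ} (A : TwistedGroupAlgebra G α)

set_option maxHeartbeats 1000000 in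
lemma aux_embed (N : Subgroup G)
    (S : Type) [AddCommGroup S] [Module A.carrier S]
    (hfaith : ∀ a : A.carrier, (∀ s : S, a • s = 0) → a = 0)
    (M : Type) [AddCommGroup M] [Module (A.sub N) M] (hM : IsSimpleModule (A.sub N) M) :
    ∃ ψ : M →ₗ[A.sub N] S, Function.Injective ψ := by
  haveI := hM
  haveI : Nontrivial M := IsSimpleModule.nontrivial (R := (A.sub N)) (M := M)
  obtain ⟨m₀, hm₀⟩ := exists_ne (0 : M)
  -- a surjection B → M
  set θ : (A.sub N) →ₗ[(A.sub N)] M := LinearMap.toSpanSingleton _ _ m₀ with hθ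
  have hθs : Function.Surjective θ := by
    refine LinearMap.range_eq_top.mp ?_
    rcases eq_bot_or_eq_top (LinearMap.range θ) with h | h
    · exfalso
      apply hm₀
      have : θ 1 ∈ LinearMap.range θ := LinearMap.mem_range_self θ 1
      rw [h, Submodule.mem_bot] at this
      rwa [hθ, LinearMap.toSpanSingleton_apply_one] at this
    · exact h
  -- a complement of ker θ
  obtain ⟨P1, hP1⟩ := aux_proj A N (A.sub N) (LinearMap.ker θ)
  have hcompl : IsCompl (LinearMap.ker θ) (LinearMap.ker P1) := LinearMap.isCompl_of_proj hP1
  set θC : (LinearMap.ker P1) →ₗ[A.sub N] M := θ.comp (LinearMap.ker P1).subtype with hθC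
  have hinj : Function.Injective θC := by
    rw [← LinearMap.ker_eq_bot]
    rw [Submodule.eq_bot_iff]
    rintro ⟨x, hx⟩ hx0
    have hxk : x ∈ LinearMap.ker θ := hx0
    have : x ∈ LinearMap.ker θ ⊓ LinearMap.ker P1 := ⟨hxk, hx⟩
    rw [hcompl.inf_eq_bot, Submodule.mem_bot] at this
    exact Subtype.ext this
  have hsur : Function.Surjective θC := by
    intro m
    obtain ⟨b, hb⟩ := hθs m
    have hbm : b ∈ LinearMap.ker θ ⊔ LinearMap.ker P1 := by
      rw [hcompl.sup_eq_top]; trivial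
    obtain ⟨y, hy, z, hz, rfl⟩ := Submodule.mem_sup.mp hbm
    refine ⟨⟨z, hz⟩, ?_⟩
    have : θ (y + z) = m := hb
    rwa [map_add, LinearMap.mem_ker.mp hy, zero_add] at this
  set eMC := LinearEquiv.ofBijective θC ⟨hinj, hsur⟩ with heMC
  set ιM : M →ₗ[A.sub N] (A.sub N) := (LinearMap.ker P1).subtype.comp eMC.symm.toLinearMap
    with hιM
  have hιMinj : Function.Injective ιM :=
    Subtype.val_injective.comp eMC.symm.injective
  -- the inclusion B → A and the faithful map A → (S → S)
  set ιBA : (A.sub N) →ₗ[A.sub N] A.carrier :=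
    { toFun := Subtype.val
      map_add' := fun _ _ => rfl
      map_smul' := fun _ _ => rfl } with hιBA
  have hιBAinj : Function.Injective ιBA := Subtype.val_injective
  set Φ : A.carrier →ₗ[A.sub N] (S → S) :=
    { toFun := fun a s => a • s
      map_add' := fun a₁ a₂ => by funext s; exact add_smul a₁ a₂ s
      map_smul' := fun b a => by
        funext s
        show ((b : A.carrier) * a) • s = (b : A.carrier) • (a • s)
        rw [mul_smul] } with hΦ
  have hΦinj : Function.Injective Φ := by
    intro a₁ a₂ h
    have h2 : ∀ s : S, (a₁ - a₂) • s = 0 := by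
      intro s
      rw [sub_smul, sub_eq_zero]
      exact congrFun h s
    exact sub_eq_zero.mp (hfaith _ h2)
  set χ : M →ₗ[A.sub N] (S → S) := Φ.comp (ιBA.comp ιM) with hχ
  have hχinj : Function.Injective χ := by
    simp only [hχ, LinearMap.coe_comp]
    exact hΦinj.comp (hιBAinj.comp hιMinj)
  have hχm₀ : χ m₀ ≠ 0 := fun h => hm₀ (hχinj (h.trans (map_zero χ).symm))
  obtain ⟨s, hs⟩ := Function.ne_iff.mp hχm₀
  set ψ : M →ₗ[A.sub N] S := (LinearMap.proj s).comp χ with hψ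
  have hψm₀ : ψ m₀ ≠ 0 := hs
  refine ⟨ψ, ?_⟩
  rw [← LinearMap.ker_eq_bot]
  rcases eq_bot_or_eq_top (LinearMap.ker ψ) with h | h
  · exact h
  · exfalso
    exact hψm₀ (by rw [← LinearMap.mem_ker, h]; trivial)

end Embed
section Trans
open TwistedGroupAlgebra
variable {G : Type} [Group G] [Fintype G] {α : G → G → ℂˣ}

set_option maxHeartbeats 1000000 in
lemma aux_trans (A : TwistedGroupAlgebra G α) (hA : IsSimpleRing A.carrier)
    (N : Subgroup G) [N.Normal] : TransAction A N := by
  intro M _ _ M' _ _ hM hM'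
  classical
  haveI := hA
  haveI := hM
  haveI := hM'
  haveI : Nontrivial M := IsSimpleModule.nontrivial (R := (A.sub N)) (M := M)
  haveI : Nontrivial M' := IsSimpleModule.nontrivial (R := (A.sub N)) (M := M')
  -- a simple faithful A-module S = A ⧸ I
  obtain ⟨I, hI⟩ := Ideal.exists_maximal A.carrier
  haveI hSsimple : IsSimpleModule A.carrier (A.carrier ⧸ I) :=
    isSimpleModule_iff_isCoatom.mpr (Ideal.isMaximal_def.mp hI)
  haveI : Nontrivial (A.carrier ⧸ I) :=
    IsSimpleModule.nontrivial (R := A.carrier) (M := A.carrier ⧸ I)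
  have hfaith : ∀ a : A.carrier, (∀ s : A.carrier ⧸ I, a • s = 0) → a = 0 := by
    intro a ha
    set J : TwoSidedIdeal A.carrier := TwoSidedIdeal.mk'
      {x : A.carrier | ∀ s : A.carrier ⧸ I, x • s = 0}
      (fun s => by rw [zero_smul])
      (fun {x y} hx hy s => by rw [add_smul, hx s, hy s, add_zero])
      (fun {x} hx s => by rw [neg_smul, hx s, neg_zero])
      (fun {x y} hy s => by rw [mul_smul, hy s, smul_zero])
      (fun {x y} hx s => by rw [mul_smul, hx (y • s)]) with hJ
    rcases eq_bot_or_eq_top J with h | h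
    · have haJ : a ∈ J := by
        rw [hJ, TwoSidedIdeal.mem_mk']
        exact ha
      rw [h] at haJ
      exact (TwoSidedIdeal.mem_bot _).mp haJ
    · exfalso
      have h1 : (1 : A.carrier) ∈ J := by rw [h]; exact TwoSidedIdeal.mem_top _
      rw [hJ, TwoSidedIdeal.mem_mk'] at h1
      obtain ⟨s, hs⟩ := exists_ne (0 : A.carrier ⧸ I)
      exact hs (by rw [← one_smul A.carrier s]; exact h1 s)
  -- embed M and M' into S
  obtain ⟨ψ, hψ⟩ := aux_embed A N (A.carrier ⧸ I) hfaith M hM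
  obtain ⟨ψ', hψ'⟩ := aux_embed A N (A.carrier ⧸ I) hfaith M' hM'
  -- the translated submodules
  set Rg : G → Submodule (A.sub N) (A.carrier ⧸ I) := fun g =>
    Submodule.span (A.sub N) (Set.range fun m : M => (A.u g : A.carrier) • ψ m) with hRg
  have hmap : ∀ (h g : G) (s : A.carrier ⧸ I), s ∈ Rg g →
      (A.u h : A.carrier) • s ∈ Rg (h * g) := by
    intro h g s hs
    refine Submodule.span_induction
      (p := fun x _ => (A.u h : A.carrier) • x ∈ Rg (h * g)) ?_ ?_ ?_ ?_ hs
    · rintro _ ⟨m, rfl⟩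
      have key : (A.u h : A.carrier) • (A.u g : A.carrier) • ψ m =
          (algebraMap ℂ A.carrier (α h g)) • ((A.u (h * g) : A.carrier) • ψ m) := by
        rw [← mul_smul, A.u_mul, Algebra.smul_def, mul_smul]
      rw [key]
      have hgen : (A.u (h * g) : A.carrier) • ψ m ∈ Rg (h * g) :=
        Submodule.subset_span ⟨m, rfl⟩
      exact Submodule.smul_mem _ (algebraMap ℂ (A.sub N) (α h g)) hgen
    · show (A.u h : A.carrier) • (0 : A.carrier ⧸ I) ∈ Rg (h * g)
      rw [smul_zero]; exact Submodule.zero_mem _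
    · intro x y _ _ hx hy
      show (A.u h : A.carrier) • (x + y) ∈ Rg (h * g)
      rw [smul_add]; exact Submodule.add_mem _ hx hy
    · intro b x _ hx
      show (A.u h : A.carrier) • (b • x) ∈ Rg (h * g)
      have key : (A.u h : A.carrier) • (b • x) =
          (⟨(A.u h : A.carrier) * ↑b * (↑(A.u h)⁻¹ : A.carrier), aux_conj_mem' A h b.2⟩ :
            A.sub N) • ((A.u h : A.carrier) • x) := by
        show (A.u h : A.carrier) • ((b : A.carrier) • x) =
          ((A.u h : A.carrier) * ↑b * (↑(A.u h)⁻¹ : A.carrier)) • ((A.u h : A.carrier) • x)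
        rw [← mul_smul, ← mul_smul, mul_assoc, Units.inv_mul, mul_one]
      rw [key]
      exact Submodule.smul_mem _ _ hx
  set U : Submodule (A.sub N) (A.carrier ⧸ I) := ⨆ g, Rg g with hU
  have hUu : ∀ (h : G) (s : A.carrier ⧸ I), s ∈ U → (A.u h : A.carrier) • s ∈ U := by
    intro h s hs
    refine Submodule.iSup_induction (motive := fun s => (A.u h : A.carrier) • s ∈ U) Rg hs ?_ ?_ ?_
    · intro g x hx
      exact Submodule.mem_iSup_of_mem (h * g) (hmap h g x hx)
    · show (A.u h : A.carrier) • (0 : A.carrier ⧸ I) ∈ U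
      rw [smul_zero]; exact Submodule.zero_mem _
    · intro x y hx hy
      show (A.u h : A.carrier) • (x + y) ∈ U
      rw [smul_add]; exact Submodule.add_mem _ hx hy
  have hUA : ∀ (a : A.carrier) (s : A.carrier ⧸ I), s ∈ U → a • s ∈ U := by
    intro a s hs
    have ha : a = ∑ g : G, A.basis.repr a g • A.basis g := (A.basis.sum_repr a).symm
    rw [ha, Finset.sum_smul]
    refine Submodule.sum_mem _ fun g _ => ?_
    rw [Algebra.smul_def, mul_smul, A.basis_eq]
    exact Submodule.smul_mem _ (algebraMap ℂ (A.sub N) _) (hUu g s hs)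
  set UA : Submodule A.carrier (A.carrier ⧸ I) :=
    { carrier := ↑U
      add_mem' := fun hx hy => U.add_mem hx hy
      zero_mem' := U.zero_mem
      smul_mem' := fun a {s} hs => hUA a s hs } with hUA'
  obtain ⟨m₀, hm₀⟩ := exists_ne (0 : M)
  have hx₀ : (A.u 1 : A.carrier) • ψ m₀ ∈ U :=
    Submodule.mem_iSup_of_mem 1 (Submodule.subset_span ⟨m₀, rfl⟩)
  have hx₀ne : (A.u 1 : A.carrier) • ψ m₀ ≠ 0 := by
    intro h0
    have : ψ m₀ = 0 := by
      have := congrArg (fun s => (↑(A.u 1)⁻¹ : A.carrier) • s) h0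
      simpa [← mul_smul, Units.inv_mul] using this
    exact hm₀ (hψ (this.trans (map_zero ψ).symm))
  have hUAtop : UA = ⊤ := by
    rcases eq_bot_or_eq_top UA with h | h
    · exfalso
      have : (A.u 1 : A.carrier) • ψ m₀ ∈ UA := hx₀
      rw [h, Submodule.mem_bot] at this
      exact hx₀ne this
    · exact h
  have hUtop : ∀ s : A.carrier ⧸ I, s ∈ U := by
    intro s
    have : s ∈ UA := by rw [hUAtop]; trivial
    exact this
  -- a projection S → M'
  obtain ⟨P2, hP2⟩ := aux_proj A N (A.carrier ⧸ I) (LinearMap.range ψ')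
  set eqv := LinearEquiv.ofInjective ψ' hψ' with heqv
  set q : (A.carrier ⧸ I) →ₗ[A.sub N] M' := eqv.symm.toLinearMap.comp P2 with hq
  have hqψ' : ∀ m' : M', q (ψ' m') = m' := by
    intro m'
    have h1 : P2 (ψ' m') = ⟨ψ' m', LinearMap.mem_range_self ψ' m'⟩ :=
      hP2 ⟨ψ' m', LinearMap.mem_range_self ψ' m'⟩
    have h2 : eqv m' = ⟨ψ' m', LinearMap.mem_range_self ψ' m'⟩ :=
      Subtype.ext (LinearEquiv.ofInjective_apply ψ' m')
    show eqv.symm (P2 (ψ' m')) = m'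
    rw [h1, ← h2, LinearEquiv.symm_apply_apply]
  obtain ⟨m₀', hm₀'⟩ := exists_ne (0 : M')
  -- find g with q nonzero on Rg g
  have hnotall : ¬ ∀ g : G, Rg g ≤ LinearMap.ker q := by
    intro hall
    have hle : U ≤ LinearMap.ker q := iSup_le hall
    have : q (ψ' m₀') = 0 := hle (hUtop (ψ' m₀'))
    rw [hqψ'] at this
    exact hm₀' this
  push_neg at hnotall
  obtain ⟨g, hg⟩ := hnotall
  have hexists : ∃ m : M, q ((A.u g : A.carrier) • ψ m) ≠ 0 := by
    by_contra hno
    push_neg at hno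
    refine hg (Submodule.span_le.mpr ?_)
    rintro _ ⟨m, rfl⟩
    exact LinearMap.mem_ker.mpr (hno m)
  obtain ⟨mh, hmh⟩ := hexists
  -- the twisted morphism F
  set Fh : M →+ M' :=
    { toFun := fun m => q ((A.u g : A.carrier) • ψ m)
      map_zero' := by
        show q ((A.u g : A.carrier) • ψ (0 : M)) = 0
        rw [map_zero, smul_zero, map_zero]
      map_add' := fun m₁ m₂ => by
        show q ((A.u g : A.carrier) • ψ (m₁ + m₂)) = _
        rw [map_add, smul_add, map_add] } with hFh
  have F_twist : ∀ (b : A.sub N) (m : M),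
      Fh ((⟨(↑(A.u g)⁻¹ : A.carrier) * ↑b * (A.u g : A.carrier), aux_conj_mem A g b.2⟩ :
        A.sub N) • m) = b • Fh m := by
    intro b m
    show q ((A.u g : A.carrier) • ψ ((⟨(↑(A.u g)⁻¹ : A.carrier) * ↑b * (A.u g : A.carrier),
      aux_conj_mem A g b.2⟩ : A.sub N) • m)) = b • q ((A.u g : A.carrier) • ψ m)
    rw [map_smul ψ]
    have key : (A.u g : A.carrier) •
        ((⟨(↑(A.u g)⁻¹ : A.carrier) * ↑b * (A.u g : A.carrier), aux_conj_mem A g b.2⟩ :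
          A.sub N) • ψ m) = (b : A.carrier) • ((A.u g : A.carrier) • ψ m) := by
      show (A.u g : A.carrier) •
          (((↑(A.u g)⁻¹ : A.carrier) * ↑b * (A.u g : A.carrier)) • ψ m) = _
      rw [← mul_smul, ← mul_assoc, ← mul_assoc, Units.mul_inv, one_mul, mul_smul]
    rw [key]
    exact map_smul q b _
  -- kernel and range of F
  have F_ker_smul : ∀ (b : A.sub N) (m : M), Fh m = 0 → Fh (b • m) = 0 := by
    intro b m hm
    set b₀ : A.sub N := ⟨(A.u g : A.carrier) * ↑b * (↑(A.u g)⁻¹ : A.carrier),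
      aux_conj_mem' A g b.2⟩ with hb₀
    have hb : (⟨(↑(A.u g)⁻¹ : A.carrier) * ↑b₀ * (A.u g : A.carrier),
        aux_conj_mem A g b₀.2⟩ : A.sub N) = b := by
      refine Subtype.ext ?_
      show (↑(A.u g)⁻¹ : A.carrier) * ((A.u g : A.carrier) * ↑b * (↑(A.u g)⁻¹ : A.carrier)) *
        (A.u g : A.carrier) = ↑b
      rw [← mul_assoc, ← mul_assoc, Units.inv_mul, one_mul, mul_assoc, Units.inv_mul, mul_one]
    rw [← hb, F_twist b₀ m, hm, smul_zero]
  set K : Submodule (A.sub N) M :=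
    { carrier := {m : M | Fh m = 0}
      add_mem' := fun {m₁ m₂} h₁ h₂ => by
        show Fh (m₁ + m₂) = 0
        rw [map_add, h₁, h₂, add_zero]
      zero_mem' := map_zero Fh
      smul_mem' := fun b {m} hm => F_ker_smul b m hm } with hK
  have hKbot : K = ⊥ := by
    rcases eq_bot_or_eq_top K with h | h
    · exact h
    · exfalso
      exact hmh (by have : mh ∈ K := by rw [h]; trivial
                    exact this)
  have Finj : Function.Injective Fh := by
    intro m₁ m₂ h
    have : m₁ - m₂ ∈ K := by
      show Fh (m₁ - m₂) = 0
      rw [map_sub, h, sub_self]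
    rw [hKbot, Submodule.mem_bot] at this
    exact sub_eq_zero.mp this
  set Rng : Submodule (A.sub N) M' :=
    { carrier := Set.range Fh
      add_mem' := fun {x y} ⟨m₁, h₁⟩ ⟨m₂, h₂⟩ => ⟨m₁ + m₂, by rw [map_add, h₁, h₂]⟩
      zero_mem' := ⟨0, map_zero Fh⟩
      smul_mem' := fun b {x} hx => by
        obtain ⟨m, rfl⟩ := hx
        exact ⟨_, F_twist b m⟩ } with hRng
  have hRngtop : Rng = ⊤ := by
    rcases eq_bot_or_eq_top Rng with h | h
    · exfalso
      have : Fh mh ∈ Rng := ⟨mh, rfl⟩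
      rw [h, Submodule.mem_bot] at this
      exact hmh this
    · exact h
  have Fsur : Function.Surjective Fh := by
    intro m'
    have : m' ∈ Rng := by rw [hRngtop]; trivial
    exact this
  set E := AddEquiv.ofBijective Fh ⟨Finj, Fsur⟩ with hE
  refine ⟨g, E.symm, ?_⟩
  intro a m' h
  apply E.injective
  rw [AddEquiv.apply_symm_apply]
  have hcoe : (⟨(↑(A.u g)⁻¹ : A.carrier) * ↑a * (A.u g : A.carrier), h⟩ : A.sub N) =
      ⟨(↑(A.u g)⁻¹ : A.carrier) * ↑a * (A.u g : A.carrier), aux_conj_mem A g a.2⟩ := rfl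
  have hEF : ∀ m : M, E m = Fh m := fun m => rfl
  rw [hcoe, hEF, F_twist a (E.symm m'), ← hEF, AddEquiv.apply_symm_apply]

end Trans
open TwistedGroupAlgebra in
/-- If `ℂ^αG` is a simple ring and `N ⊴ G`, then the action of `G/N`
on isomorphism classes of simple `ℂ^αN`-modules (by `gN • [M] = [{}^gM]`) is
transitive; in particular all simple `ℂ^αN`-modules have the same dimension. -/
theorem stmt6 {G : Type} [Group G] [Fintype G] (α : G → G → ℂˣ) (hα : IsTwoCocycle α)
    (A : TwistedGroupAlgebra G α) (hA : IsSimpleRing A.carrier)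
    (N : Subgroup G) [N.Normal] :
    TransAction A N ∧
    ∀ (M : Type) [AddCommGroup M] [Module (A.sub N) M]
      (M' : Type) [AddCommGroup M'] [Module (A.sub N) M'],
      IsSimpleModule (A.sub N) M → IsSimpleModule (A.sub N) M' →
        dimC A N M = dimC A N M' := by
  have htrans := aux_trans A hA N
  refine ⟨htrans, ?_⟩
  intro M _ _ M' _ _ hM hM'
  obtain ⟨g, e, he⟩ := htrans M M' hM hM'
  have hcent : ∀ c : ℂ, (↑(A.u g)⁻¹ : A.carrier) * ↑(algebraMap ℂ (A.sub N) c) *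
      (A.u g : A.carrier) = ↑(algebraMap ℂ (A.sub N) c) := by
    intro c
    show (↑(A.u g)⁻¹ : A.carrier) * (algebraMap ℂ A.carrier c) * (A.u g : A.carrier) =
      algebraMap ℂ A.carrier c
    rw [mul_assoc, Algebra.commutes c ((A.u g : A.carrier)), ← mul_assoc, Units.inv_mul, one_mul]
  have hsm : ∀ (c : ℂ) (m' : M'), e ((algebraMap ℂ (A.sub N) c) • m') =
      (algebraMap ℂ (A.sub N) c) • e m' := by
    intro c m'
    have hmem : (↑(A.u g)⁻¹ : A.carrier) * ↑(algebraMap ℂ (A.sub N) c) *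
        (A.u g : A.carrier) ∈ A.sub N := by
      rw [hcent]; exact (algebraMap ℂ (A.sub N) c).2
    rw [he (algebraMap ℂ (A.sub N) c) m' hmem]
    congr 1
    exact Subtype.ext (hcent c)
  have fr : Module.finrank ℂ (RestrictScalars ℂ (A.sub N) M') =
      Module.finrank ℂ (RestrictScalars ℂ (A.sub N) M) := by
    refine LinearEquiv.finrank_eq
      ({ toFun := fun x => (RestrictScalars.addEquiv ℂ (A.sub N) M).symm
            (e ((RestrictScalars.addEquiv ℂ (A.sub N) M') x))
         invFun := fun x => (RestrictScalars.addEquiv ℂ (A.sub N) M').symm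
            (e.symm ((RestrictScalars.addEquiv ℂ (A.sub N) M) x))
         left_inv := fun x => by simp
         right_inv := fun x => by simp
         map_add' := fun x y => by simp
         map_smul' := fun c x => by
           apply (RestrictScalars.addEquiv ℂ (A.sub N) M).injective
           rw [RingHom.id_apply, RestrictScalars.addEquiv_map_smul,
             AddEquiv.apply_symm_apply, RestrictScalars.addEquiv_map_smul, hsm,
             AddEquiv.apply_symm_apply]
       } : RestrictScalars ℂ (A.sub N) M' ≃ₗ[ℂ] RestrictScalars ℂ (A.sub N) M)
  exact fr.symm
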